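/- The map Δ : GL(φ)₁ → GL(φ)₀ given by Δ(A) := (I + A∘φ, I + φ∘A), together with the action A^{(F,f)} = F⁻¹∘A∘f, is a crossed module of groups: Δ is a group homomorphism from (GL(φ)₁, ⊙), Δ(A^{(F,f)}) = (F,f)⁻¹·Δ(A)·(F,f), and A₁^{Δ(A₂)} = A₂⁻¹ ⊙ A₁ ⊙ A₂. -/

import Mathlib

open LinearMap

variable {K W V : Type} [Field K] [AddCommGroup W] [AddCommGroup V]
  [Module K W] [Module K V]

/-- Membership in the Whitehead group `GL(φ)₁`. -/
def glOne1Mem (φ : W →ₗ[K] V) (A : V →ₗ[K] W) : Prop :=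
  IsUnit ((1 : Module.End K W) + A ∘ₗ φ) ∧ IsUnit ((1 : Module.End K V) + φ ∘ₗ A)

/-- The group operation `A₁ ⊙ A₂ = A₁ + A₂ + A₁ ∘ φ ∘ A₂`. -/
def glMul (φ : W →ₗ[K] V) (A₁ A₂ : V →ₗ[K] W) : V →ₗ[K] W :=
  A₁ + A₂ + A₁ ∘ₗ φ ∘ₗ A₂

/-- The `⊙`-inverse `−A∘(I+φ∘A)⁻¹`. -/
noncomputable def glInv (φ : W →ₗ[K] V) (A : V →ₗ[K] W) : V →ₗ[K] W :=
  -(A ∘ₗ Ring.inverse ((1 : Module.End K V) + φ ∘ₗ A))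

/-- The right action `A^{(F,f)} = F⁻¹ ∘ A ∘ f`. -/
def glAct (A : V →ₗ[K] W) (F : (Module.End K W)ˣ) (f : (Module.End K V)ˣ) :
    V →ₗ[K] W :=
  ((F⁻¹ : (Module.End K W)ˣ) : Module.End K W) ∘ₗ A ∘ₗ ((f : (Module.End K V)ˣ) : Module.End K V)

/-- `Δ(A) = (I+A∘φ, I+φ∘A)` together with `A^{(F,f)} = F⁻¹∘A∘f` is a crossed
module of groups. -/
theorem glDelta_crossed_module (φ : W →ₗ[K] V) :
    -- Δ lands in GL(φ)₀ (intertwining)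
    (∀ A : V →ₗ[K] W,
      φ ∘ₗ ((1 : Module.End K W) + A ∘ₗ φ) = ((1 : Module.End K V) + φ ∘ₗ A) ∘ₗ φ) ∧
    -- Δ is a group homomorphism from (GL(φ)₁, ⊙)
    (∀ A₁ A₂ : V →ₗ[K] W,
      (1 : Module.End K W) + glMul φ A₁ A₂ ∘ₗ φ =
        ((1 : Module.End K W) + A₁ ∘ₗ φ) * ((1 : Module.End K W) + A₂ ∘ₗ φ) ∧
      (1 : Module.End K V) + φ ∘ₗ glMul φ A₁ A₂ =
        ((1 : Module.End K V) + φ ∘ₗ A₁) * ((1 : Module.End K V) + φ ∘ₗ A₂)) ∧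
    -- equivariance: Δ(A^{(F,f)}) = (F,f)⁻¹ · Δ(A) · (F,f)
    (∀ (A : V →ₗ[K] W) (F : (Module.End K W)ˣ) (f : (Module.End K V)ˣ),
      φ ∘ₗ (F : Module.End K W) = (f : Module.End K V) ∘ₗ φ →
      ((1 : Module.End K W) + glAct A F f ∘ₗ φ =
        ((F⁻¹ : (Module.End K W)ˣ) : Module.End K W) *
          ((1 : Module.End K W) + A ∘ₗ φ) * (F : Module.End K W)) ∧
      ((1 : Module.End K V) + φ ∘ₗ glAct A F f =
        ((f⁻¹ : (Module.End K V)ˣ) : Module.End K V) *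
          ((1 : Module.End K V) + φ ∘ₗ A) * (f : Module.End K V))) ∧
    -- Peiffer: A₁^{Δ(A₂)} = A₂⁻¹ ⊙ A₁ ⊙ A₂
    (∀ (A₁ A₂ : V →ₗ[K] W) (h : glOne1Mem φ A₂),
      glAct A₁ h.1.unit h.2.unit = glMul φ (glMul φ (glInv φ A₂) A₁) A₂) := by
  refine ⟨?_, ?_, ?_, ?_⟩
  · intro A
    ext w
    simp [LinearMap.add_apply, comp_apply, Module.End.one_apply]
  · intro A₁ A₂
    constructor <;>
    · ext x
      simp [glMul, LinearMap.add_apply, comp_apply, Module.End.mul_apply, Module.End.one_apply, map_add]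
      abel
  · intro A F f hFf
    have hFf' : ∀ w : W, φ ((F : Module.End K W) w) = (f : Module.End K V) (φ w) :=
      fun w => congrFun (congrArg DFunLike.coe hFf) w
    have hFF : ∀ w : W, ((F⁻¹ : (Module.End K W)ˣ) : Module.End K W)
        ((F : Module.End K W) w) = w := by
      intro w
      rw [← Module.End.mul_apply, F.inv_mul, Module.End.one_apply]
    have hff : ∀ v : V, ((f⁻¹ : (Module.End K V)ˣ) : Module.End K V)
        ((f : Module.End K V) v) = v := by
      intro v
      rw [← Module.End.mul_apply, f.inv_mul, Module.End.one_apply]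
    have hFF' : ∀ w : W, (F : Module.End K W)
        (((F⁻¹ : (Module.End K W)ˣ) : Module.End K W) w) = w := by
      intro w
      rw [← Module.End.mul_apply, F.mul_inv, Module.End.one_apply]
    have hinv : ∀ w : W, φ (((F⁻¹ : (Module.End K W)ˣ) : Module.End K W) w)
        = ((f⁻¹ : (Module.End K V)ˣ) : Module.End K V) (φ w) := by
      intro w
      calc φ (((F⁻¹ : (Module.End K W)ˣ) : Module.End K W) w)
          = ((f⁻¹ : (Module.End K V)ˣ) : Module.End K V)
              ((f : Module.End K V) (φ (((F⁻¹ : (Module.End K W)ˣ) : Module.End K W) w))) := by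
            rw [hff]
        _ = ((f⁻¹ : (Module.End K V)ˣ) : Module.End K V) (φ w) := by
            rw [← hFf', hFF']
    constructor
    · ext w
      simp [glAct, LinearMap.add_apply, comp_apply, Module.End.mul_apply, Module.End.one_apply, map_add, hFf', hFF]
    · ext v
      simp [glAct, LinearMap.add_apply, comp_apply, Module.End.mul_apply, Module.End.one_apply, map_add, hinv, hff]
  · intro A₁ A₂ h
    set a := A₂ with ha
    set g : Module.End K V := ((h.2.unit⁻¹ : (Module.End K V)ˣ) : Module.End K V) with hgdef
    have hg : Ring.inverse ((1 : Module.End K V) + φ ∘ₗ a) = g := by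
      rw [← h.2.unit_spec, Ring.inverse_unit]
    have hg1 : ∀ x : V, g x + g (φ (a x)) = x := by
      intro x
      have h2 := congrFun (congrArg DFunLike.coe h.2.unit.inv_mul) x
      rw [Module.End.mul_apply, Module.End.one_apply, h.2.unit_spec] at h2
      simp only [LinearMap.add_apply, comp_apply, Module.End.one_apply, map_add] at h2
      rw [hgdef]
      exact h2
    have hg2 : ∀ x : V, g x + φ (a (g x)) = x := by
      intro x
      have h2 := congrFun (congrArg DFunLike.coe h.2.unit.mul_inv) x
      rw [Module.End.mul_apply, Module.End.one_apply, h.2.unit_spec] at h2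
      simp only [LinearMap.add_apply, comp_apply, Module.End.one_apply, map_add] at h2
      rw [hgdef]
      exact h2
    have key1 : ∀ x : V, A₂ (g x) + A₂ (g (φ (A₂ x))) = A₂ x := by
      intro x
      rw [← map_add, hg1]
    have key2 : ∀ x : V, A₂ (g x) + A₂ (φ (A₂ (g x))) = A₂ x := by
      intro x
      rw [← map_add, hg2]
    have hFinv : ((h.1.unit⁻¹ : (Module.End K W)ˣ) : Module.End K W)
        = 1 - a ∘ₗ g ∘ₗ φ := by
      refine Units.inv_eq_of_mul_eq_one_right ?_
      rw [h.1.unit_spec]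
      ext w
      simp only [Module.End.mul_apply, LinearMap.add_apply, LinearMap.sub_apply, Module.End.one_apply, comp_apply, map_sub, map_add]
      rw [(key2 (φ w)).symm]
      abel
    ext v
    simp only [glAct, glMul, glInv, hg, hFinv, comp_apply, LinearMap.add_apply, LinearMap.sub_apply, LinearMap.neg_apply,
      Module.End.one_apply, h.2.unit_spec, map_add, map_neg]
    set t1 := φ (a v) with ht1
    rw [(key1 v).symm, ← ht1]
    simp only [← ha, hg]
    abel
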